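/- The language over alphabet {medicalFolder, diagnosis, analysis, treatment, descp, result} consisting of all label sequences of paths from the root to updatable treatment nodes — namely sequences matching (medicalFolder ∪ diagnosis) · treatment^* · treatment when restricted to the relevant suffix — is an infinite regular language, and it is not a finite union of languages each of the form w_0 Σ^* w_1 Σ^* ⋯ Σ^* w_k (where the w_i are fixed finite words and Σ^* denotes an arbitrary gap), i.e., it cannot be expressed as a finite union of downward XPath path patterns using only child and descendant steps. -/

import Mathlib

/-- The alphabet of element-type labels. -/
inductive Letter where
  | medicalFolder | diagnosis | analysis | treatment | descp | result
deriving DecidableEq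

open Letter

/-- The language of label sequences of root-to-node paths leading to updatable
`treatment` nodes: words ending in `x · treatment^n` with `n ≥ 1` and
`x ∈ {medicalFolder, diagnosis}`. -/
def L14 : Set (List Letter) :=
  {w | ∃ (u : List Letter) (x : Letter) (n : ℕ), 1 ≤ n ∧
    (x = medicalFolder ∨ x = diagnosis) ∧
    w = u ++ x :: List.replicate n treatment}

/-- Denotation of a downward XPath path pattern `w₀ Σ* w₁ Σ* ⋯ Σ* w_k`, given by
the list `[w₀, …, w_k]` of its fixed words: each gap `Σ*` may be filled by an
arbitrary word. -/
def patLang : List (List Letter) → Set (List Letter)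
  | [] => {[]}
  | [w] => {w}
  | w :: ws => {v | ∃ (g r : List Letter), r ∈ patLang ws ∧ v = w ++ g ++ r}

/-! ### Auxiliary lemmas -/

lemma rep_eq (n : ℕ) : ∀ (m : ℕ) {x y : Letter} {s s' : List Letter},
    x ≠ treatment → y ≠ treatment →
    List.replicate n treatment ++ x :: s = List.replicate m treatment ++ y :: s' →
    x = y := by
  induction n with
  | zero =>
    intro m x y s s' hx hy h
    cases m with
    | zero => simp at h; exact h.1
    | succ m => simp [List.replicate_succ] at h; exact absurd h.1 hx
  | succ n ih =>
    intro m x y s s' hx hy h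
    cases m with
    | zero => simp [List.replicate_succ] at h; exact absurd h.1.symm hy
    | succ m =>
      simp only [List.replicate_succ, List.cons_append, List.cons.injEq, true_and] at h
      exact ih m hx hy h

lemma notL14 (v : List Letter) (m : ℕ) :
    (v ++ Letter.analysis :: List.replicate m treatment) ∉ L14 := by
  rintro ⟨u, x, n, hn, hx, heq⟩
  have h : List.replicate m treatment ++ Letter.analysis :: v.reverse =
      List.replicate n treatment ++ x :: u.reverse := by
    have := congrArg List.reverse heq
    simpa [List.reverse_append, List.append_assoc] using this
  have hxt : x ≠ treatment := by rcases hx with rfl | rfl <;> simp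
  have := rep_eq m n (by simp) hxt h
  rcases hx with rfl | rfl <;> simp_all

lemma patLang_cons (w w' : List Letter) (ws : List (List Letter)) :
    patLang (w :: w' :: ws) = {v | ∃ g r, r ∈ patLang (w' :: ws) ∧ v = w ++ g ++ r} := rfl

lemma pump (p : List (List Letter)) : ∀ w, 2 ≤ p.length → w ∈ patLang p →
    ∃ v wk, w = v ++ wk ∧ wk ∈ p ∧ ∀ z, v ++ z ++ wk ∈ patLang p := by
  induction p with
  | nil => intro w h; simp at h
  | cons w0 ws ih =>
    intro w hlen hw
    cases ws with
    | nil => simp at hlen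
    | cons w1 ws' =>
      rw [patLang_cons] at hw
      obtain ⟨g, r, hr, hv⟩ := hw
      cases ws' with
      | nil =>
        simp only [patLang, Set.mem_singleton_iff] at hr
        subst hr
        refine ⟨w0 ++ g, r, by simp [hv, List.append_assoc], by simp, fun z => ?_⟩
        rw [patLang_cons]
        exact ⟨g ++ z, r, by simp [patLang], by simp [List.append_assoc]⟩
      | cons w2 ws'' =>
        obtain ⟨v', wk, hsplit, hmem, hins⟩ := ih r (by simp) hr
        refine ⟨w0 ++ g ++ v', wk, by simp [hv, hsplit, List.append_assoc],
          List.mem_cons_of_mem _ hmem, fun z => ?_⟩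
        rw [patLang_cons]
        exact ⟨g, v' ++ z ++ wk, hins z, by simp [List.append_assoc]⟩

lemma flatten_map_singleton (w : List Letter) :
    (w.map (fun c => [c])).flatten = w := by
  induction w <;> simp [*]

lemma flatten_all_t : ∀ S : List (List Letter), (∀ y ∈ S, y = [treatment]) →
    S.flatten = List.replicate S.length treatment := by
  intro S
  induction S with
  | nil => simp
  | cons y S ih =>
    intro h
    rw [List.flatten_cons, h y (by simp), ih (fun z hz => h z (by simp [hz]))]
    simp [List.replicate_succ]

lemma replicate_flatten (k : ℕ) :
    (List.replicate k ([treatment] : List Letter)).flatten = List.replicate k treatment := by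
  induction k <;> simp [List.replicate_succ, *]

/-- The regular expression `Σ` matching any single letter. -/
def anyLetterRE : RegularExpression Letter :=
  RegularExpression.char medicalFolder + RegularExpression.char diagnosis +
  RegularExpression.char analysis + RegularExpression.char treatment +
  RegularExpression.char descp + RegularExpression.char result

lemma sigma_univ (w : List Letter) : w ∈ anyLetterRE.star.matches' := by
  rw [RegularExpression.matches'_star]
  refine Language.mem_kstar.mpr ⟨w.map (fun c => [c]), (flatten_map_singleton w).symm, ?_⟩
  intro y hy
  simp only [List.mem_map] at hy
  obtain ⟨c, _, rfl⟩ := hy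
  cases c <;>
    · simp only [anyLetterRE, RegularExpression.matches'_add, RegularExpression.matches'_char,
        Language.add_def]
      first
      | exact Or.inr rfl
      | exact Or.inl (Or.inr rfl)
      | exact Or.inl (Or.inl (Or.inr rfl))
      | exact Or.inl (Or.inl (Or.inl (Or.inr rfl)))
      | exact Or.inl (Or.inl (Or.inl (Or.inl (Or.inr rfl))))
      | exact Or.inl (Or.inl (Or.inl (Or.inl (Or.inl rfl))))

lemma tstar (ts : List Letter) :
    ts ∈ (RegularExpression.char treatment).star.matches' ↔
      ∃ k, ts = List.replicate k treatment := by
  rw [RegularExpression.matches'_star, Language.mem_kstar]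
  constructor
  · rintro ⟨S, rfl, hS⟩
    refine ⟨S.length, flatten_all_t S fun y hy => ?_⟩
    have := hS y hy
    rw [RegularExpression.matches'_char] at this; exact this
  · rintro ⟨k, rfl⟩
    refine ⟨List.replicate k [treatment], (replicate_flatten k).symm, fun y hy => ?_⟩
    rw [List.eq_of_mem_replicate hy, RegularExpression.matches'_char]
    rfl

/-- `L14` is infinite, regular (denoted by some regular expression),
and is not a finite union of downward XPath path patterns
`w₀ Σ* w₁ Σ* ⋯ Σ* w_k`. -/
theorem stmt14 :
    L14.Infinite ∧
    (∃ r : RegularExpression Letter, (r.matches' : Set (List Letter)) = L14) ∧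
    ¬ ∃ ps : List (List (List Letter)),
        L14 = {w | ∃ p ∈ ps, w ∈ patLang p} := by
  refine ⟨?_, ?_, ?_⟩
  · -- infinite
    refine Set.infinite_of_injective_forall_mem
      (f := fun n : ℕ => medicalFolder :: List.replicate (n + 1) treatment) ?_ ?_
    · intro m n h
      have := congrArg List.length h
      simpa using this
    · intro n
      exact ⟨[], medicalFolder, n + 1, by omega, Or.inl rfl, rfl⟩
  · -- regular
    refine ⟨anyLetterRE.star * (RegularExpression.char medicalFolder +
        RegularExpression.char diagnosis) * (RegularExpression.char treatment).star *
        RegularExpression.char treatment, ?_⟩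
    ext w
    simp only [RegularExpression.matches'_mul]
    constructor
    · intro hw
      rw [Language.mem_mul] at hw
      obtain ⟨abc, habc, d, hd, rfl⟩ := hw
      rw [Language.mem_mul] at habc
      obtain ⟨ab, hab, c, hc, rfl⟩ := habc
      rw [Language.mem_mul] at hab
      obtain ⟨u, _, b, hb, rfl⟩ := hab
      obtain ⟨k, rfl⟩ := (tstar c).mp hc
      simp only [RegularExpression.matches'_add, RegularExpression.matches'_char,
        Language.add_def, Set.mem_union, Set.mem_singleton_iff] at hb
      simp only [RegularExpression.matches'_char, Set.mem_singleton_iff] at hd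
      subst hd
      rcases hb with rfl | rfl
      · exact ⟨u, medicalFolder, k + 1, by omega, Or.inl rfl,
          by simp [List.replicate_succ', List.append_assoc]⟩
      · exact ⟨u, diagnosis, k + 1, by omega, Or.inr rfl,
          by simp [List.replicate_succ', List.append_assoc]⟩
    · rintro ⟨u, x, n, hn, hx, rfl⟩
      obtain ⟨k, rfl⟩ : ∃ k, n = k + 1 := ⟨n - 1, by omega⟩
      refine Language.mem_mul.mpr ⟨u ++ [x] ++ List.replicate k treatment, ?_, [treatment],
        by rw [RegularExpression.matches'_char]; rfl, ?_⟩
      · refine Language.mem_mul.mpr ⟨u ++ [x], ?_, List.replicate k treatment,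
          (tstar _).mpr ⟨k, rfl⟩, rfl⟩
        refine Language.mem_mul.mpr ⟨u, sigma_univ u, [x], ?_, rfl⟩
        simp only [RegularExpression.matches'_add, RegularExpression.matches'_char,
          Language.add_def, Set.mem_union, Set.mem_singleton_iff]
        rcases hx with rfl | rfl
        · exact Or.inl rfl
        · exact Or.inr rfl
      · simp [List.replicate_succ', List.append_assoc]
  · -- not a finite union of patterns
    rintro ⟨ps, hps⟩
    set N := 1 + (ps.map (fun p => (p.map List.length).sum)).sum with hN
    have hwL : (medicalFolder :: List.replicate N treatment) ∈ L14 :=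
      ⟨[], medicalFolder, N, by omega, Or.inl rfl, rfl⟩
    rw [hps] at hwL
    obtain ⟨p, hp, hwp⟩ := hwL
    have hbound : ∀ q ∈ p, q.length + 1 ≤ N := by
      intro q hq
      have h1 : q.length ≤ (p.map List.length).sum :=
        List.single_le_sum (by simp) _ (List.mem_map_of_mem hq)
      have h2 : (p.map List.length).sum ≤
          (ps.map (fun p => (p.map List.length).sum)).sum :=
        List.single_le_sum (by simp) _ (List.mem_map_of_mem hp)
      omega
    match p, hwp, hp, hbound with
    | [], hwp, hp, hbound => simp [patLang] at hwp
    | [q], hwp, hp, hbound =>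
      simp only [patLang, Set.mem_singleton_iff] at hwp
      have hq := hbound q (by simp)
      have := congrArg List.length hwp
      simp at this
      omega
    | q0 :: q1 :: qs, hwp, hp, hbound =>
      obtain ⟨v, wk, hsplit, hmem, hins⟩ := pump _ _ (by simp) hwp
      have hwk := hbound wk hmem
      have hlen : v.length + wk.length = N + 1 := by
        have := congrArg List.length hsplit
        simp at this
        omega
      obtain ⟨k, hk⟩ : ∃ k, v.length = k + 1 := ⟨v.length - 1, by omega⟩
      have hwkrep : wk = List.replicate (N - k) treatment := by
        have h1 : wk = List.drop v.length (medicalFolder :: List.replicate N treatment) := by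
          rw [hsplit, List.drop_left]
        rw [h1, hk, List.drop_succ_cons, List.drop_replicate]
      have hmem' : v ++ [Letter.analysis] ++ wk ∈ L14 := by
        rw [hps]
        exact ⟨q0 :: q1 :: qs, hp, hins [Letter.analysis]⟩
      rw [hwkrep] at hmem'
      exact notL14 v (N - k) (by simpa [List.append_assoc] using hmem')
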